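/- Let k be a field of characteristic 2, f, h ∈ k[X] with h ≠ 0, let H be the radical of h, and suppose f = H·Q where Q ∈ k[X] is coprime to H. Then the affine curve Y² + h(X)Y = f(X) is smooth (has no singular points over the algebraic closure) if and only if Res_X(H, Q·H') ≠ 0. -/

import Mathlib

open Polynomial

/-- The Sylvester matrix of two polynomials `α` and `β`, of size
`β.natDegree + α.natDegree`. -/
noncomputable def sylvesterMatrix {R : Type*} [CommRing R] (α β : R[X]) :
    Matrix (Fin (β.natDegree + α.natDegree)) (Fin (β.natDegree + α.natDegree)) R :=
  fun i j =>
    if (j : ℕ) < β.natDegree then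
      (if (j : ℕ) ≤ (i : ℕ) then α.coeff ((i : ℕ) - (j : ℕ)) else 0)
    else
      (if (j : ℕ) - β.natDegree ≤ (i : ℕ) then
        β.coeff ((i : ℕ) - ((j : ℕ) - β.natDegree)) else 0)

/-- The resultant of two polynomials, as the determinant of their Sylvester matrix. -/
noncomputable def resultant {R : Type*} [CommRing R] (α β : R[X]) : R :=
  (sylvesterMatrix α β).det

lemma sylvester_mulVec {k : Type*} [CommRing k] (α β : k[X])
    (c : Fin (β.natDegree + α.natDegree) → k) (i : Fin (β.natDegree + α.natDegree)) :
    (sylvesterMatrix α β).mulVec c i =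
      ((∑ j : Fin β.natDegree, C (c (Fin.castAdd _ j)) * X ^ (j : ℕ)) * α
        + (∑ l : Fin α.natDegree, C (c (Fin.natAdd _ l)) * X ^ (l : ℕ)) * β).coeff i := by
  rw [coeff_add, Finset.sum_mul, Finset.sum_mul, finset_sum_coeff, finset_sum_coeff]
  have e1 : ∀ j : Fin β.natDegree,
      (C (c (Fin.castAdd _ j)) * X ^ (j : ℕ) * α).coeff i
        = c (Fin.castAdd _ j) * (if (j : ℕ) ≤ (i : ℕ) then α.coeff ((i : ℕ) - (j : ℕ)) else 0) := by
    intro j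
    rw [show C (c (Fin.castAdd _ j)) * X ^ (j : ℕ) * α
        = C (c (Fin.castAdd _ j)) * (α * X ^ (j : ℕ)) by ring, coeff_C_mul, coeff_mul_X_pow']
  have e2 : ∀ l : Fin α.natDegree,
      (C (c (Fin.natAdd _ l)) * X ^ (l : ℕ) * β).coeff i
        = c (Fin.natAdd _ l) * (if (l : ℕ) ≤ (i : ℕ) then β.coeff ((i : ℕ) - (l : ℕ)) else 0) := by
    intro l
    rw [show C (c (Fin.natAdd _ l)) * X ^ (l : ℕ) * β
        = C (c (Fin.natAdd _ l)) * (β * X ^ (l : ℕ)) by ring, coeff_C_mul, coeff_mul_X_pow']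
  rw [Finset.sum_congr rfl (fun j _ => e1 j), Finset.sum_congr rfl (fun l _ => e2 l)]
  rw [Matrix.mulVec, dotProduct, Fin.sum_univ_add]
  congr 1
  · apply Finset.sum_congr rfl
    intro j _
    rw [mul_comm]
    congr 1
    simp [sylvesterMatrix, j.isLt]
  · apply Finset.sum_congr rfl
    intro l _
    rw [mul_comm]
    congr 1
    simp [sylvesterMatrix]


lemma coeff_finsum' {k : Type*} [CommRing k] (n : ℕ) (a : Fin n → k) (i : ℕ) :
    (∑ j : Fin n, C (a j) * X ^ (j : ℕ)).coeff i = if h : i < n then a ⟨i, h⟩ else 0 := by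
  rw [finset_sum_coeff]
  simp only [coeff_C_mul, coeff_X_pow]
  split
  · next h =>
    rw [Finset.sum_eq_single (⟨i, h⟩ : Fin n)]
    · simp
    · intro b _ hb
      simp [Fin.ext_iff] at hb
      have : i ≠ (b : ℕ) := fun hc => hb hc.symm
      simp [this]
    · simp
  · next h =>
    apply Finset.sum_eq_zero
    intro b _
    have : i ≠ (b : ℕ) := by omega
    simp [this]

lemma eq_sum_fin {k : Type*} [CommRing k] {n : ℕ} {u : k[X]} (h : u.degree < n) :
    u = ∑ j : Fin n, C (u.coeff j) * X ^ (j : ℕ) := by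
  ext i
  rw [finset_sum_coeff]
  simp only [coeff_C_mul, coeff_X_pow]
  by_cases hi : i < n
  · rw [Finset.sum_eq_single (⟨i, hi⟩ : Fin n)]
    · simp
    · intro b _ hb
      simp [Fin.ext_iff] at hb
      have : i ≠ (b : ℕ) := fun hc => hb hc.symm
      simp [this]
    · simp
  · rw [Finset.sum_eq_zero, coeff_eq_zero_of_degree_lt]
    · exact lt_of_lt_of_le h (by exact_mod_cast Nat.le_of_not_lt hi)
    · intro b _
      have : i ≠ (b : ℕ) := by omega
      simp [this]

lemma resultant_eq_zero_iff {k : Type*} [Field k] (α β : k[X]) :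
    _root_.resultant α β = 0 ↔ ∃ u v : k[X],
      u.degree < (β.natDegree : WithBot ℕ) ∧ v.degree < (α.natDegree : WithBot ℕ) ∧
      ¬(u = 0 ∧ v = 0) ∧ u * α + v * β = 0 := by
  set n := β.natDegree with hn
  set m := α.natDegree with hm
  rw [_root_.resultant, ← Matrix.exists_mulVec_eq_zero_iff]
  constructor
  · rintro ⟨c, hc0, hc⟩
    set u := ∑ j : Fin n, C (c (Fin.castAdd m j)) * X ^ (j : ℕ) with hudef
    set v := ∑ l : Fin m, C (c (Fin.natAdd n l)) * X ^ (l : ℕ) with hvdef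
    have hud : u.degree < (n : WithBot ℕ) := by
      refine lt_of_le_of_lt (degree_sum_le _ _) ?_
      rw [Finset.sup_lt_iff (by exact_mod_cast WithBot.bot_lt_coe n)]
      intro j _
      exact lt_of_le_of_lt (degree_C_mul_X_pow_le _ _) (by exact_mod_cast j.isLt)
    have hvd : v.degree < (m : WithBot ℕ) := by
      refine lt_of_le_of_lt (degree_sum_le _ _) ?_
      rw [Finset.sup_lt_iff (by exact_mod_cast WithBot.bot_lt_coe m)]
      intro l _
      exact lt_of_le_of_lt (degree_C_mul_X_pow_le _ _) (by exact_mod_cast l.isLt)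
    refine ⟨u, v, hud, hvd, ?_, ?_⟩
    · rintro ⟨hu, hv⟩
      apply hc0
      funext jj
      simp only [Pi.zero_apply]
      by_cases h : (jj : ℕ) < n
      · have h1 := coeff_finsum' n (fun j => c (Fin.castAdd m j)) jj
        rw [← hudef, hu, coeff_zero] at h1
        rw [dif_pos h] at h1
        have he : Fin.castAdd m ⟨(jj : ℕ), h⟩ = jj := by ext; rfl
        rw [he] at h1
        exact h1.symm
      · have hlt : (jj : ℕ) - n < m := by have := jj.isLt; omega
        have h2 := coeff_finsum' m (fun l => c (Fin.natAdd n l)) ((jj : ℕ) - n)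
        rw [← hvdef, hv, coeff_zero] at h2
        rw [dif_pos hlt] at h2
        have he : Fin.natAdd n ⟨(jj : ℕ) - n, hlt⟩ = jj := by
          ext; simp; omega
        rw [he] at h2
        exact h2.symm
    · ext i
      rw [coeff_zero]
      by_cases hi : i < n + m
      · have h3 := congrFun hc ⟨i, hi⟩
        rw [sylvester_mulVec] at h3
        simpa using h3
      · apply coeff_eq_zero_of_degree_lt
        have h3 : (u * α).degree < ((n + m : ℕ) : WithBot ℕ) := by
          refine lt_of_le_of_lt (degree_mul_le _ _) ?_
          push_cast
          by_cases hα0 : α = 0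
          · simp [hα0]
          · exact WithBot.add_lt_add_of_lt_of_le (by simp [hα0]) hud degree_le_natDegree
        have h4 : (v * β).degree < ((n + m : ℕ) : WithBot ℕ) := by
          refine lt_of_le_of_lt (degree_mul_le _ _) ?_
          push_cast
          rw [add_comm (n : WithBot ℕ) (m : WithBot ℕ)]
          by_cases hβ0 : β = 0
          · simp [hβ0]
          · exact WithBot.add_lt_add_of_lt_of_le (by simp [hβ0]) hvd degree_le_natDegree
        refine lt_of_lt_of_le (lt_of_le_of_lt (degree_add_le _ _) (max_lt h3 h4)) ?_
        exact_mod_cast Nat.le_of_not_lt hi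
  · rintro ⟨u, v, hud, hvd, hne, heq⟩
    classical
    refine ⟨fun j : Fin (n + m) =>
      if h : (j : ℕ) < n then u.coeff (j : ℕ) else v.coeff ((j : ℕ) - n), ?_, ?_⟩
    · by_cases hu0 : u = 0
      · have hv0 : v ≠ 0 := fun hv0 => hne ⟨hu0, hv0⟩
        have hdm : v.natDegree < m := by
          rwa [natDegree_lt_iff_degree_lt hv0]
        intro hc0
        have h1 := congrFun hc0 ⟨n + v.natDegree, by omega⟩
        simp only [Pi.zero_apply] at h1
        rw [dif_neg (by simp)] at h1
        simp only [Nat.add_sub_cancel_left] at h1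
        exact hv0 (leadingCoeff_eq_zero.mp h1)
      · have hdn : u.natDegree < n := by
          rwa [natDegree_lt_iff_degree_lt hu0]
        intro hc0
        have h1 := congrFun hc0 ⟨u.natDegree, by omega⟩
        simp only [Pi.zero_apply] at h1
        rw [dif_pos hdn] at h1
        exact hu0 (leadingCoeff_eq_zero.mp h1)
    · funext i
      rw [Pi.zero_apply, sylvester_mulVec]
      have hu' : (∑ j : Fin n,
          C (if h : ((Fin.castAdd m j : Fin (n + m)) : ℕ) < n
              then u.coeff ((Fin.castAdd m j : Fin (n + m)) : ℕ)
              else v.coeff (((Fin.castAdd m j : Fin (n + m)) : ℕ) - n)) * X ^ (j : ℕ)) = u := by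
        conv_rhs => rw [eq_sum_fin hud]
        apply Finset.sum_congr rfl
        intro j _
        rw [dif_pos (show ((Fin.castAdd m j : Fin (n + m)) : ℕ) < n from j.isLt)]
        rfl
      have hv' : (∑ l : Fin m,
          C (if h : ((Fin.natAdd n l : Fin (n + m)) : ℕ) < n
              then u.coeff ((Fin.natAdd n l : Fin (n + m)) : ℕ)
              else v.coeff (((Fin.natAdd n l : Fin (n + m)) : ℕ) - n)) * X ^ (l : ℕ)) = v := by
        conv_rhs => rw [eq_sum_fin hvd]
        apply Finset.sum_congr rfl
        intro l _
        rw [dif_neg (by simp)]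
        congr 2
        simp
      rw [hu', hv', heq, coeff_zero]

lemma resultant_eq_zero_iff_not_coprime {k : Type*} [Field k] {α β : k[X]}
    (hα : α ≠ 0) (hβ : β ≠ 0) : _root_.resultant α β = 0 ↔ ¬ IsCoprime α β := by
  rw [_root_.resultant_eq_zero_iff]
  constructor
  · rintro ⟨u, v, hud, hvd, hne, heq⟩ hcop
    have hβu : β ∣ u := by
      have hdvd : β ∣ u * α := ⟨-v, by linear_combination heq⟩
      exact hcop.symm.dvd_of_dvd_mul_right hdvd
    have hu0 : u = 0 := by
      by_contra h
      have h1 : β.degree ≤ u.degree := degree_le_of_dvd hβu h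
      rw [degree_eq_natDegree hβ] at h1
      exact absurd (lt_of_le_of_lt h1 hud) (lt_irrefl _)
    have hv0 : v = 0 := by
      rw [hu0, zero_mul, zero_add] at heq
      exact (mul_eq_zero.mp heq).resolve_right hβ
    exact hne ⟨hu0, hv0⟩
  · intro hncop
    classical
    set d := EuclideanDomain.gcd α β with hd
    have hd0 : d ≠ 0 := fun h => hα (EuclideanDomain.gcd_eq_zero_iff.mp h).1
    have hdu : ¬ IsUnit d := fun h => hncop (EuclideanDomain.gcd_isUnit_iff.mp h)
    have hdeg : 0 < d.natDegree := by
      rcases Nat.eq_zero_or_pos d.natDegree with h | h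
      · exact absurd (isUnit_iff_degree_eq_zero.mpr
          (by rw [degree_eq_natDegree hd0, h]; rfl)) hdu
      · exact h
    obtain ⟨a, ha⟩ := EuclideanDomain.gcd_dvd_left α β
    obtain ⟨b, hb⟩ := EuclideanDomain.gcd_dvd_right α β
    have ha0 : a ≠ 0 := by rintro rfl; rw [mul_zero] at ha; exact hα ha
    have hb0 : b ≠ 0 := by rintro rfl; rw [mul_zero] at hb; exact hβ hb
    refine ⟨b, -a, ?_, ?_, ?_, ?_⟩
    · rw [degree_eq_natDegree hb0]
      have : β.natDegree = d.natDegree + b.natDegree := by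
        rw [hb, natDegree_mul hd0 hb0]
      exact_mod_cast (by omega : b.natDegree < β.natDegree)
    · rw [degree_neg, degree_eq_natDegree ha0]
      have : α.natDegree = d.natDegree + a.natDegree := by
        rw [ha, natDegree_mul hd0 ha0]
      exact_mod_cast (by omega : a.natDegree < α.natDegree)
    · rintro ⟨h1, _⟩; exact hb0 h1
    · linear_combination b * ha - a * hb

lemma sylvesterMatrix_zero_right {k : Type*} [Field k] (α : k[X]) :
    sylvesterMatrix α (0 : k[X]) = 0 := by
  funext i j
  simp [sylvesterMatrix]

lemma resultant_zero_right_eq_zero {k : Type*} [Field k] {α : k[X]} (h : 0 < α.natDegree) :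
    _root_.resultant α 0 = 0 := by
  rw [_root_.resultant, sylvesterMatrix_zero_right]
  haveI : Nonempty (Fin ((0 : k[X]).natDegree + α.natDegree)) := by
    rw [natDegree_zero]
    exact ⟨⟨0, by omega⟩⟩
  exact Matrix.det_zero

lemma resultant_zero_right_ne_zero {k : Type*} [Field k] {α : k[X]} (h : α.natDegree = 0) :
    _root_.resultant α 0 ≠ 0 := by
  rw [_root_.resultant]
  haveI : IsEmpty (Fin ((0 : k[X]).natDegree + α.natDegree)) := by
    rw [natDegree_zero, h]
    exact Fin.isEmpty'
  rw [Matrix.det_isEmpty]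
  exact one_ne_zero

lemma not_isCoprime_iff_common_root {k : Type*} [Field k] {p q : k[X]} (hp : p ≠ 0) :
    (¬ IsCoprime p q) ↔ ∃ x : AlgebraicClosure k, aeval x p = 0 ∧ aeval x q = 0 := by
  constructor
  · intro hncop
    classical
    set d := EuclideanDomain.gcd p q with hd
    have hd0 : d ≠ 0 := fun h => hp (EuclideanDomain.gcd_eq_zero_iff.mp h).1
    have hdu : ¬ IsUnit d := fun h => hncop (EuclideanDomain.gcd_isUnit_iff.mp h)
    have hdeg : d.degree ≠ 0 := fun h => hdu (isUnit_iff_degree_eq_zero.mpr h)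
    obtain ⟨x, hx⟩ := IsAlgClosed.exists_aeval_eq_zero (AlgebraicClosure k) d hdeg
    obtain ⟨a, ha⟩ := EuclideanDomain.gcd_dvd_left p q
    obtain ⟨b, hb⟩ := EuclideanDomain.gcd_dvd_right p q
    refine ⟨x, ?_, ?_⟩
    · rw [ha, map_mul, ← hd, hx, zero_mul]
    · rw [hb, map_mul, ← hd, hx, zero_mul]
  · rintro ⟨x, hx1, hx2⟩ ⟨a, b, hab⟩
    have := congrArg (aeval x) hab
    rw [map_add, map_mul, map_mul, hx1, hx2, mul_zero, mul_zero, add_zero, map_one] at this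
    exact one_ne_zero this.symm

open UniqueFactorizationMonoid in
open scoped Classical in
lemma aeval_radical_eq_zero {k : Type*} [Field k] [NormalizationMonoid k] {h : k[X]}
    (hh : h ≠ 0) {x : AlgebraicClosure k} (hx : aeval x h = 0) :
    aeval x (radical h) = 0 := by
  have hint : IsIntegral k x := (show IsAlgebraic k x from ⟨h, hh, hx⟩).isIntegral
  have hpdvd : minpoly k x ∣ h := minpoly.dvd k x hx
  have hirr : Irreducible (minpoly k x) := minpoly.irreducible hint
  obtain ⟨q, hq, hassoc⟩ := exists_mem_normalizedFactors_of_dvd hh hirr hpdvd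
  have hqdvd : q ∣ radical h := by
    rw [radical]
    exact Finset.dvd_prod_of_mem _ (by
      rw [primeFactors]; exact (@Multiset.mem_toFinset _ (fun a b => Classical.propDecidable _) q (normalizedFactors h)).mpr hq)
  obtain ⟨c, hc⟩ := hqdvd
  obtain ⟨e, he⟩ := hassoc.dvd
  rw [hc, he, map_mul, map_mul, minpoly.aeval, zero_mul, zero_mul]

/-- Let `k` have characteristic 2, `h ≠ 0` with radical `H`, and `f = H·Q` with
`Q` coprime to `H`.  The affine curve `Y² + h(X)Y = f(X)` is smooth (no singular
point over the algebraic closure) iff `Res_X(H, Q·H') ≠ 0`. -/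
theorem char_two_curve_smooth_iff_resultant_ne_zero {k : Type*} [Field k] [NormalizationMonoid k] [CharP k 2]
    (f h Q : k[X]) (hh : h ≠ 0)
    (hf : f = UniqueFactorizationMonoid.radical h * Q)
    (hcop : IsCoprime (UniqueFactorizationMonoid.radical h) Q) :
    (¬ ∃ x y : AlgebraicClosure k,
        y ^ 2 + aeval x h * y = aeval x f ∧
        2 * y + aeval x h = 0 ∧
        aeval x (derivative h) * y - aeval x (derivative f) = 0) ↔
      _root_.resultant (UniqueFactorizationMonoid.radical h)
        (Q * derivative (UniqueFactorizationMonoid.radical h)) ≠ 0 := by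
  set H := UniqueFactorizationMonoid.radical h with hH
  set β := Q * derivative H with hβdef
  have hH0 : H ≠ 0 := UniqueFactorizationMonoid.radical_ne_zero
  have key : (∃ x y : AlgebraicClosure k,
        y ^ 2 + aeval x h * y = aeval x f ∧
        2 * y + aeval x h = 0 ∧
        aeval x (derivative h) * y - aeval x (derivative f) = 0) ↔
      ∃ x : AlgebraicClosure k, aeval x H = 0 ∧ aeval x β = 0 := by
    constructor
    · rintro ⟨x, y, h1, h2, h3⟩
      have htwo : (2 : AlgebraicClosure k) = 0 := by
        exact_mod_cast CharP.cast_eq_zero (AlgebraicClosure k) 2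
      have h2' : aeval x h = 0 := by rwa [htwo, zero_mul, zero_add] at h2
      have hHx : aeval x H = 0 := aeval_radical_eq_zero hh h2'
      have hfx : aeval x f = 0 := by rw [hf, map_mul, hHx, zero_mul]
      have hy : y = 0 := by
        rw [hfx, h2', zero_mul, add_zero] at h1
        exact pow_eq_zero_iff (two_ne_zero) |>.mp h1
      refine ⟨x, hHx, ?_⟩
      rw [hy, mul_zero, zero_sub, neg_eq_zero, hf, derivative_mul, map_add, map_mul, map_mul,
        hHx, zero_mul, add_zero] at h3
      rw [hβdef, map_mul]
      linear_combination h3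
    · rintro ⟨x, hHx, hQHx⟩
      have hhx : aeval x h = 0 := by
        obtain ⟨t, ht⟩ := (UniqueFactorizationMonoid.radical_dvd_self : UniqueFactorizationMonoid.radical h ∣ h)
        rw [ht, map_mul, hHx, zero_mul]
      refine ⟨x, 0, ?_, ?_, ?_⟩
      · rw [hf, map_mul, hHx, zero_mul]; ring
      · rw [mul_zero, zero_add]; exact hhx
      · rw [mul_zero, zero_sub, neg_eq_zero, hf, derivative_mul, map_add, map_mul, map_mul,
          hHx, zero_mul, add_zero]
        rw [hβdef, map_mul] at hQHx
        linear_combination hQHx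
  have main : (∃ x : AlgebraicClosure k, aeval x H = 0 ∧ aeval x β = 0) ↔
      _root_.resultant H β = 0 := by
    by_cases hβ0 : β = 0
    · rw [hβ0]
      rcases Nat.eq_zero_or_pos H.natDegree with hd | hd
      · refine iff_of_false ?_ (fun hcon => resultant_zero_right_ne_zero hd hcon)
        rintro ⟨x, hx, -⟩
        obtain ⟨a, ha⟩ := natDegree_eq_zero.mp hd
        have ha0 : a ≠ 0 := fun h0 => hH0 (by rw [← ha, h0, map_zero])
        rw [← ha, aeval_C] at hx
        exact ha0 ((_root_.map_eq_zero _).mp hx)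
      · refine iff_of_true ?_ (resultant_zero_right_eq_zero hd)
        have hdeg : H.degree ≠ 0 := by
          rw [degree_eq_natDegree hH0]
          exact_mod_cast (by omega : H.natDegree ≠ 0)
        obtain ⟨x, hx⟩ := IsAlgClosed.exists_aeval_eq_zero (AlgebraicClosure k) H hdeg
        exact ⟨x, hx, by rw [map_zero]⟩
    · exact (not_isCoprime_iff_common_root hH0).symm.trans
        (resultant_eq_zero_iff_not_coprime hH0 hβ0).symm
  rw [key, main]
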